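/- arXiv:math/0106099 — 3 statements merged into one kernel-verified Lean document; each statement's English description precedes it below -/
import Mathlib

section
/- Define g : ℕ → ℕ by g(m) = sInf {x : ℕ | ∃ y, y ∈ eval (ofNat m) x ∧ y < 2^x}, i.e. g(m) is the least input x at which the machine with Gödel number m halts with output strictly smaller than 2^x (and g(m) = 0 if there is no such x). Then no computable total function dominates g: for every computable h : ℕ → ℕ it is not the case that there exists y such that h(x) ≥ g(x) for all x > y. (The paper's main result, Proposition 3.2, for the function g defined over all Turing machines.) -/
open Nat.Partrec Nat.Partrec.Code

private def padC : Code → Code := fun c => c.comp Code.id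

private theorem padC_eval (c : Code) : (padC c).eval = c.eval := by
  funext n
  simp [padC, Nat.Partrec.Code.eval, Seq.seq]
  exact Part.bind_some n c.eval

private theorem padC_encode (c : Code) : Encodable.encode c < Encodable.encode (padC c) :=
  (Nat.Partrec.Code.encode_lt_comp c Code.id).1

private theorem padC_prim : Primrec padC :=
  Nat.Partrec.Code.primrec₂_comp.comp Primrec.id (Primrec.const Code.id)

private theorem padIter_prim (k : ℕ) : Primrec (fun c => padC^[k] c) := by
  induction k with
  | zero => exact Primrec.id
  | succ n ih =>
      exact (padC_prim.comp ih).of_eq fun c =>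
        (Function.iterate_succ_apply' padC n c).symm

private theorem padIter_eval (k : ℕ) (c : Code) : (padC^[k] c).eval = c.eval := by
  induction k with
  | zero => simp
  | succ n ih => rw [Function.iterate_succ', Function.comp_apply, padC_eval, ih]

private theorem padIter_encode (k : ℕ) (c : Code) :
    k ≤ Encodable.encode (padC^[k] c) := by
  induction k with
  | zero => exact Nat.zero_le _
  | succ n ih =>
      rw [Function.iterate_succ', Function.comp_apply]
      exact Nat.lt_of_le_of_lt ih (padC_encode _)

theorem no_computable_function_dominates_g (h : ℕ → ℕ) (hh : Computable h) :
    ¬ ∃ y : ℕ, ∀ x : ℕ, x > y →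
      h x ≥ sInf {z : ℕ |
        ∃ w, w ∈ (Denumerable.ofNat Nat.Partrec.Code x).eval z ∧ w < 2 ^ z} := by
  rintro ⟨y, hy⟩
  -- the target value of a code
  set M : Code → ℕ := fun c => h (Encodable.encode (padC^[y+1] c)) + 1 with hM
  have hMcomp : Computable M :=
    Computable.succ.comp (hh.comp (Primrec.encode.comp (padIter_prim (y+1))).to_comp)
  -- the diagonal partial function
  have hf : Partrec₂ (fun (c : Code) (x : ℕ) =>
      Part.ofOption (if x = M c then some 0 else none)) := by
    have hb : Computable fun p : Code × ℕ => decide (p.2 = M p.1) :=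
      Primrec.eq.decide.to_comp.comp Computable.snd (hMcomp.comp Computable.fst)
    have hcomp : Computable fun p : Code × ℕ =>
        (if p.2 = M p.1 then some 0 else none : Option ℕ) :=
      (Computable.cond hb (Computable.const (some 0))
        (Computable.const none)).of_eq fun p => by
          by_cases hp : p.2 = M p.1 <;> simp [hp]
    exact (Computable.ofOption hcomp).to₂
  obtain ⟨c, hc⟩ := Nat.Partrec.Code.fixed_point₂ hf
  set m : ℕ := Encodable.encode (padC^[y+1] c) with hm
  have hmy : m > y := Nat.lt_of_lt_of_le (Nat.lt_succ_self y) (padIter_encode (y+1) c)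
  have hev : (Denumerable.ofNat Code m).eval = c.eval := by
    rw [hm, Denumerable.ofNat_encode, padIter_eval]
  have hMc : M c = h m + 1 := rfl
  have hset : {z : ℕ | ∃ w, w ∈ (Denumerable.ofNat Code m).eval z ∧ w < 2 ^ z}
      = {h m + 1} := by
    ext z
    simp only [Set.mem_setOf_eq, hev, hc, Set.mem_singleton_iff, hMc]
    constructor
    · rintro ⟨w, hw, -⟩
      by_contra hz
      rw [if_neg hz] at hw
      simp at hw
    · rintro rfl
      refine ⟨0, ?_, by positivity⟩
      rw [if_pos rfl]
      simp
  have := hy m hmy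
  rw [hset] at this
  simp at this
end

section
/- Define g : ℕ → ℕ by g(m) = sInf {x : ℕ | ∃ y, y ∈ eval (ofNat m) x ∧ y < 2^x}. Then g overtakes every total recursive function infinitely often: for every computable h : ℕ → ℕ, the set {m : ℕ | h m < g m} is infinite. -/
open Nat.Partrec Code

namespace GOvertake

def pad (c : Code) : Code := c.comp Code.id

theorem eval_pad (c : Code) : (pad c).eval = c.eval := by
  funext x
  simp [pad, Code.eval, eval_id, Seq.seq]
  exact Part.bind_some _ _

theorem encode_lt_pad (c : Code) : Encodable.encode c < Encodable.encode (pad c) :=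
  (encode_lt_comp c Code.id).1

theorem pad_prim : Primrec pad :=
  primrec₂_comp.comp Primrec.id (Primrec.const Code.id)

theorem eval_pad_iter (c : Code) (j : ℕ) : (pad^[j] c).eval = c.eval := by
  induction j with
  | zero => rfl
  | succ j ih => rw [Function.iterate_succ_apply', eval_pad, ih]

theorem strictMono_pad_iter (c : Code) :
    StrictMono fun j => Encodable.encode (pad^[j] c) :=
  strictMono_nat_of_lt_succ fun j => by
    rw [Function.iterate_succ_apply']; exact encode_lt_pad _

-- code whose curried evaluations are the threshold functions
theorem exists_c0 : ∃ c₀ : Code, ∀ K x : ℕ,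
    (curry c₀ K).eval x = if K < x then Part.some 0 else Part.none := by
  have hf : Computable fun p : ℕ => if (Nat.unpair p).1 < (Nat.unpair p).2
      then (some 0 : Option ℕ) else none := by
    have := Primrec.ite
      (Primrec.nat_lt.comp (Primrec.fst.comp Primrec.unpair) (Primrec.snd.comp Primrec.unpair))
      (Primrec.const (some 0)) (Primrec.const (none : Option ℕ))
    exact this.to_comp
  have hp : Nat.Partrec fun p : ℕ =>
      ((if (Nat.unpair p).1 < (Nat.unpair p).2 then (some 0 : Option ℕ) else none : Option ℕ)
        : Part ℕ) :=
    Partrec.nat_iff.1 (Computable.ofOption hf)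
  obtain ⟨c₀, hc₀⟩ := exists_code.1 hp
  refine ⟨c₀, fun K x => ?_⟩
  rw [eval_curry, hc₀]
  simp [Nat.unpair_pair]
  split <;> simp

theorem padIter_prim (n : ℕ) : Primrec (fun c => pad^[n] c) := by
  induction n with
  | zero => exact Primrec.id
  | succ n ih =>
    have : Primrec (fun c => pad (pad^[n] c)) := pad_prim.comp ih
    simpa [Function.iterate_succ_apply'] using this

theorem exK (h : ℕ → ℕ) (hh : Computable h) (n : ℕ) :
    ∃ Kf : Code → ℕ, Computable Kf ∧
      ∀ c, ∀ j < n, h (Encodable.encode (pad^[j] c)) ≤ Kf c := by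
  induction n with
  | zero => exact ⟨fun _ => 0, Computable.const 0, fun _ j hj => by omega⟩
  | succ n ih =>
    obtain ⟨Kf, hKf, hle⟩ := ih
    refine ⟨fun c => max (Kf c) (h (Encodable.encode (pad^[n] c))), ?_, ?_⟩
    · exact Primrec.nat_max.to_comp.comp hKf
        (hh.comp (Primrec.encode.comp (padIter_prim n)).to_comp)
    · intro c j hj
      rcases Nat.lt_succ_iff_lt_or_eq.1 hj with hj | rfl
      · exact (hle c j hj).trans (le_max_left _ _)
      · exact le_max_right _ _

end GOvertake

theorem g_overtakes_computable_infinitely_often (h : ℕ → ℕ) (hh : Computable h) :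
    {m : ℕ | h m < sInf {x : ℕ |
      ∃ y, y ∈ (Denumerable.ofNat Nat.Partrec.Code m).eval x ∧ y < 2 ^ x}}.Infinite := by
  classical
  set S := {m : ℕ | h m < sInf {x : ℕ |
      ∃ y, y ∈ (Denumerable.ofNat Nat.Partrec.Code m).eval x ∧ y < 2 ^ x}} with hS
  intro hfin
  obtain ⟨c₀, hc₀⟩ := GOvertake.exists_c0
  set n := hfin.toFinset.card + 1 with hn
  obtain ⟨Kf, hKf, hle⟩ := GOvertake.exK h hh n
  have hF : Computable fun c => curry c₀ (Kf c) :=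
    (primrec₂_curry.comp (Primrec.const c₀) Primrec.id).to_comp.comp hKf
  obtain ⟨e, he⟩ := Nat.Partrec.Code.fixed_point hF
  -- each m_j is in S
  have hmem : ∀ j < n, Encodable.encode (GOvertake.pad^[j] e) ∈ S := by
    intro j hj
    set m := Encodable.encode (GOvertake.pad^[j] e) with hm
    have hofNat : (Denumerable.ofNat Nat.Partrec.Code m) = GOvertake.pad^[j] e :=
      Denumerable.ofNat_encode _
    have heval : ∀ x, (Denumerable.ofNat Nat.Partrec.Code m).eval x
        = if Kf e < x then Part.some 0 else Part.none := by
      intro x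
      rw [hofNat, GOvertake.eval_pad_iter, ← he, hc₀]
    have hset : {x : ℕ | ∃ y, y ∈ (Denumerable.ofNat Nat.Partrec.Code m).eval x ∧ y < 2 ^ x}
        = {x : ℕ | Kf e < x} := by
      ext x
      simp only [Set.mem_setOf_eq, heval]
      constructor
      · rintro ⟨y, hy, _⟩
        by_contra hx
        simp [hx] at hy
      · intro hx
        exact ⟨0, by simp [hx], Nat.pow_pos (by norm_num) |>.trans_le le_rfl⟩
    have hne : {x : ℕ | Kf e < x}.Nonempty := ⟨Kf e + 1, Nat.lt_succ_self _⟩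
    have hsinf : Kf e < sInf {x : ℕ | Kf e < x} := Nat.sInf_mem hne
    have : h m ≤ Kf e := hle e j hj
    simpa [hS, hset] using lt_of_le_of_lt this hsinf
  -- contradiction with cardinality
  have hsub : (Finset.range n).image (fun j => Encodable.encode (GOvertake.pad^[j] e))
      ⊆ hfin.toFinset := by
    intro m hm
    simp only [Finset.mem_image, Finset.mem_range] at hm
    obtain ⟨j, hj, rfl⟩ := hm
    exact hfin.mem_toFinset.2 (hmem j hj)
  have hcard : ((Finset.range n).image
      (fun j => Encodable.encode (GOvertake.pad^[j] e))).card = n := by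
    rw [Finset.card_image_of_injective _ (GOvertake.strictMono_pad_iter e).injective,
      Finset.card_range]
  have := Finset.card_le_card hsub
  rw [hcard] at this
  omega
end

section
/- The function g : ℕ → ℕ defined by g(m) = sInf {x : ℕ | ∃ y, y ∈ eval (ofNat m) x ∧ y < 2^x} is not computable. (Since g trivially dominates itself, this is an immediate consequence of the paper's main result that no total recursive function dominates g.) -/
open Nat.Partrec Nat.Partrec.Code

private def F : ℕ →. ℕ := fun p =>
  if (Nat.unpair p).2 = 0 then Part.some 1
  else ((Denumerable.ofNat Nat.Partrec.Code (Nat.unpair p).1).eval 0).map (fun _ => 0)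

private theorem F_partrec : Partrec F := by
  have h1 : Partrec fun p : ℕ =>
      ((Denumerable.ofNat Nat.Partrec.Code (Nat.unpair p).1).eval 0).map (fun (_ : ℕ) => (0:ℕ)) := by
    apply Partrec.map
    · exact eval_part.comp ((Computable.ofNat _).comp (Computable.fst.comp Computable.unpair))
        (Computable.const 0)
    · exact (Computable.const 0).comp Computable.fst |>.to₂
  have h2 : Computable fun p : ℕ => decide ((Nat.unpair p).2 = 0) :=
    (Primrec.eq.comp (Primrec.snd.comp Primrec.unpair) (Primrec.const 0)).decide.to_comp
  have := Partrec.cond h2 (Partrec.const' (Part.some 1)) h1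
  exact this.of_eq fun p => by by_cases h : (Nat.unpair p).2 = 0 <;> simp [F, h]

theorem g_not_computable :
    ¬ Computable (fun m : ℕ => sInf {x : ℕ |
      ∃ y, y ∈ (Denumerable.ofNat Nat.Partrec.Code m).eval x ∧ y < 2 ^ x}) := by
  intro hg
  set g := fun m : ℕ => sInf {x : ℕ |
      ∃ y, y ∈ (Denumerable.ofNat Nat.Partrec.Code m).eval x ∧ y < 2 ^ x} with hgdef
  obtain ⟨c, hc⟩ := Code.exists_code.1 (Partrec.nat_iff.1 F_partrec)
  -- key computation
  have key : ∀ e : Code, g (Encodable.encode (curry c (Encodable.encode e))) = 1 ↔ (e.eval 0).Dom := by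
    intro e
    have heval : ∀ x : ℕ, (Denumerable.ofNat Nat.Partrec.Code
        (Encodable.encode (curry c (Encodable.encode e)))).eval x
          = if x = 0 then Part.some 1 else (e.eval 0).map (fun _ => 0) := by
      intro x
      rw [Denumerable.ofNat_encode, eval_curry, hc]
      simp [F]
    by_cases hd : (e.eval 0).Dom
    · simp only [hd, iff_true]
      have hS : {x : ℕ | ∃ y, y ∈ (Denumerable.ofNat Nat.Partrec.Code
          (Encodable.encode (curry c (Encodable.encode e)))).eval x ∧ y < 2 ^ x}
          = {x : ℕ | x ≠ 0} := by
        ext x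
        simp only [Set.mem_setOf_eq, heval x]
        by_cases hx : x = 0
        · subst hx; simp
        · simp only [hx, if_false, Part.mem_map_iff]
          constructor
          · intro _; exact hx
          · intro _
            exact ⟨0, ⟨(e.eval 0).get hd, Part.get_mem hd, rfl⟩, by positivity⟩
      rw [hgdef]
      simp only [hS]
      have h1 : (1:ℕ) ∈ {x : ℕ | x ≠ 0} := by simp
      have h0 : (0:ℕ) ∉ {x : ℕ | x ≠ 0} := by simp
      refine le_antisymm (Nat.sInf_le h1) ?_
      rcases Nat.eq_zero_or_pos (sInf {x : ℕ | x ≠ 0}) with h | h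
      · have hm := Nat.sInf_mem (⟨1, h1⟩ : Set.Nonempty {x : ℕ | x ≠ 0})
        rw [h] at hm
        exact absurd hm h0
      · exact h
    · simp only [hd, iff_false]
      have hS : {x : ℕ | ∃ y, y ∈ (Denumerable.ofNat Nat.Partrec.Code
          (Encodable.encode (curry c (Encodable.encode e)))).eval x ∧ y < 2 ^ x}
          = (∅ : Set ℕ) := by
        ext x
        simp only [Set.mem_setOf_eq, heval x,
          Set.mem_empty_iff_false, iff_false]
        by_cases hx : x = 0
        · subst hx; simp
        · simp only [hx, if_false, Part.mem_map_iff]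
          rintro ⟨y, ⟨z, hz, rfl⟩, -⟩
          exact hd (Part.dom_iff_mem.mpr ⟨z, hz⟩)
      rw [hgdef]
      simp only [hS, Nat.sInf_empty]
      norm_num
  -- build computable decision for halting
  have hcomp : Computable fun e : Code =>
      decide (g (Encodable.encode (curry c (Encodable.encode e))) = 1) := by
    have h1 : Computable fun e : Code => Encodable.encode (curry c (Encodable.encode e)) :=
      Computable.encode.comp
        ((primrec₂_curry.comp (Primrec.const c) Primrec.encode).to_comp)
    exact (Primrec.eq.decide.to_comp.comp (hg.comp h1) (Computable.const 1))
  have : ComputablePred fun e : Code => (e.eval 0).Dom := by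
    rw [ComputablePred.computable_iff]
    exact ⟨_, hcomp, by funext e; simp [key e]⟩
  exact ComputablePred.halting_problem 0 this
end
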